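/- Let k be a field of characteristic zero, i ≥ 2, n > i, and let d_i be a derivation of R_i = k[x₁,…,x_i] such that whenever d_i(r) ∈ k[x_i] with deg_{x_i} ≤ l, then r ∈ k and d_i(r) = 0. Let d_n = d_i + g_i(x_i)∂_{x_{i+1}} + … + g_{n-1}(x_{n-1})∂_{x_n} be a derivation of R_n = k[x₁,…,x_n], where g_j ∈ k[x_j] \ k for i ≤ j ≤ n-1 and deg_{x_i} g_i ≤ l. If d_i is a simple derivation, then d_n is a simple derivation of R_n. -/

import Mathlib

set_option maxHeartbeats 1000000

section Conj
variable {k A B : Type*} [CommRing k] [CommRing A] [CommRing B] [Algebra k A] [Algebra k B]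

/-- Conjugate a derivation along an algebra equivalence. -/
noncomputable def conjDer (e : A ≃ₐ[k] B) (D : Derivation k A A) : Derivation k B B where
  toLinearMap := (e.toLinearMap.comp D.toLinearMap).comp e.symm.toLinearMap
  map_one_eq_zero' := by simp
  leibniz' a b := by
    simp only [LinearMap.coe_comp, Function.comp_apply, AlgEquiv.toLinearMap_apply, map_mul,
      Derivation.coeFn_coe, Derivation.leibniz, smul_eq_mul, map_add, map_mul,
      AlgEquiv.apply_symm_apply]

lemma conjDer_apply (e : A ≃ₐ[k] B) (D : Derivation k A A) (x : B) :
    conjDer e D x = e (D (e.symm x)) := rfl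

end Conj

section Steps
open Polynomial
variable {k A : Type*} [CommRing k] [CommRing A] [Algebra k A]

/-- Coefficient formula for a derivation of `A[X]` with `D (C a) = C (Dc a)`, `D X = C g`. -/
lemma coeff_der (D : Derivation k A[X] A[X]) (Dc : Derivation k A A) (g : A)
    (hC : ∀ a : A, D (C a) = C (Dc a)) (hX : D X = C g) (f : A[X]) (r : ℕ) :
    (D f).coeff r = Dc (f.coeff r) + (r + 1) • (g * f.coeff (r + 1)) := by
  induction f using Polynomial.induction_on' with
  | add p q hp hq => simp [hp, hq, smul_add, mul_add]; ring
  | monomial n a =>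
    rw [← C_mul_X_pow_eq_monomial, Derivation.leibniz, D.leibniz_pow, hX, hC]
    rcases n with _ | m
    · simp [coeff_C, coeff_monomial]; split <;> simp
    · simp only [smul_eq_mul, Nat.succ_sub_one, coeff_add, coeff_smul, coeff_C_mul, coeff_mul_C,
        coeff_X_pow, smul_mul_assoc, coeff_monomial]
      rcases eq_or_ne r m with hm | hm <;> rcases eq_or_ne r (m + 1) with h1 | h1 <;>
        simp_all [Nat.succ_inj, mul_smul_comm, smul_mul_assoc] <;> ring

lemma coeff_aeval_X' (h : Polynomial k) (r : ℕ) :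
    (Polynomial.aeval (X : A[X]) h).coeff r = algebraMap k A (h.coeff r) := by
  rw [← Polynomial.aeval_map_algebraMap A, aeval_X_left_apply, coeff_map]

end Steps

section Main
open Polynomial
variable {k A : Type*} [Field k] [CharZero k] [CommRing A] [Algebra k A]

lemma cond_step (D : Derivation k A A) (D' : Derivation k A[X] A[X]) (t : A)
    (G₀ : Polynomial k) (l : ℕ∞)
    (hC : ∀ a : A, D' (C a) = C (D a))
    (hX : D' X = C (Polynomial.aeval t G₀))
    (hG₀ : 0 < G₀.natDegree) (hG₀l : (G₀.natDegree : ℕ∞) ≤ l)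
    (hcond : ∀ (a : A) (h : Polynomial k), (h.natDegree : ℕ∞) ≤ l →
      D a = Polynomial.aeval t h → (∃ c : k, a = algebraMap k A c) ∧ h = 0)
    (p : A[X]) (h : Polynomial k) (hp : D' p = Polynomial.aeval (X : A[X]) h) :
    (∃ c : k, p = algebraMap k A[X] c) ∧ h = 0 := by
  have hco : ∀ r, D (p.coeff r) + (r + 1) • (Polynomial.aeval t G₀ * p.coeff (r + 1))
      = algebraMap k A (h.coeff r) := by
    intro r
    rw [← coeff_der D' D _ hC hX, hp, coeff_aeval_X']
  have step : ∀ r, (∃ c : k, p.coeff (r + 1) = algebraMap k A c) →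
      (∃ c : k, p.coeff r = algebraMap k A c) ∧ p.coeff (r + 1) = 0 ∧ h.coeff r = 0 := by
    intro r ⟨c', hc'⟩
    have hD : D (p.coeff r) = Polynomial.aeval t (C (h.coeff r) - (((r : k) + 1) * c') • G₀) := by
      rw [map_sub, aeval_C, map_smul, Algebra.smul_def, eq_sub_iff_add_eq, ← hco r, hc',
        nsmul_eq_mul, map_mul]
      push_cast [map_natCast, map_add, map_one]
      ring
    have hdeg : ((C (h.coeff r) - (((r : k) + 1) * c') • G₀).natDegree : ℕ∞) ≤ l := by
      refine le_trans ?_ hG₀l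
      rw [Nat.cast_le]
      exact le_trans (natDegree_sub_le _ _) (max_le (by simp) (natDegree_smul_le _ _))
    obtain ⟨⟨c, hc⟩, hz⟩ := hcond _ _ hdeg hD
    rw [sub_eq_zero] at hz
    have hc'0 : c' = 0 := by
      by_contra hne
      have h2 : ((((r : k) + 1) * c') • G₀).natDegree = G₀.natDegree := by
        rw [smul_eq_C_mul, natDegree_C_mul]
        exact mul_ne_zero (by exact_mod_cast Nat.succ_ne_zero r : ((r : k) + 1) ≠ 0) hne
      rw [← hz, natDegree_C] at h2
      omega
    refine ⟨⟨c, hc⟩, by rw [hc', hc'0, map_zero], ?_⟩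
    rw [hc'0, mul_zero, zero_smul] at hz
    exact C_eq_zero.mp hz
  have all : ∀ r, (∃ c : k, p.coeff (r + 1) = algebraMap k A c) := by
    have key : ∀ j r, p.natDegree ≤ r + j → ∃ c : k, p.coeff (r + 1) = algebraMap k A c := by
      intro j
      induction j with
      | zero => intro r hr; exact ⟨0, by simp [coeff_eq_zero_of_natDegree_lt (show p.natDegree < r + 1 by omega)]⟩
      | succ j ih => intro r hr; exact (step (r + 1) (ih (r + 1) (by omega))).1
    intro r; exact key p.natDegree r (by omega)
  have final : ∀ r, (∃ c : k, p.coeff r = algebraMap k A c) ∧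
      p.coeff (r + 1) = 0 ∧ h.coeff r = 0 := fun r => step r (all r)
  constructor
  · obtain ⟨c, hc⟩ := (final 0).1
    refine ⟨c, ?_⟩
    ext r
    rcases r with _ | s
    · simpa [Polynomial.algebraMap_apply] using hc
    · simp [Polynomial.algebraMap_apply, (final s).2.1]
  · ext r; simpa using (final r).2.2


lemma simp_step (D : Derivation k A A) (D' : Derivation k A[X] A[X]) (t : A)
    (G₀ : Polynomial k) (l : ℕ∞)
    (hC : ∀ a : A, D' (C a) = C (D a))
    (hX : D' X = C (Polynomial.aeval t G₀))
    (hG₀ : 0 < G₀.natDegree) (hG₀l : (G₀.natDegree : ℕ∞) ≤ l)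
    (hcond : ∀ (a : A) (h : Polynomial k), (h.natDegree : ℕ∞) ≤ l →
      D a = Polynomial.aeval t h → (∃ c : k, a = algebraMap k A c) ∧ h = 0)
    (hsimple : ∀ I : Ideal A, (∀ f ∈ I, D f ∈ I) → I = ⊥ ∨ I = ⊤)
    (I : Ideal A[X]) (hI : ∀ f ∈ I, D' f ∈ I) : I = ⊥ ∨ I = ⊤ := by
  by_cases hbot : I = ⊥
  · exact Or.inl hbot
  right
  obtain ⟨f₀, hf₀I, hf₀⟩ := Submodule.exists_mem_ne_zero_of_ne_bot hbot
  have hSne : Set.Nonempty {d | ∃ f ∈ I, f ≠ 0 ∧ f.natDegree = d} :=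
    ⟨f₀.natDegree, f₀, hf₀I, hf₀, rfl⟩
  obtain ⟨m, hmdef⟩ : ∃ m', m' = sInf {d | ∃ f ∈ I, f ≠ 0 ∧ f.natDegree = d} := ⟨_, rfl⟩
  obtain ⟨f₁, hf₁I, hf₁0, hf₁deg⟩ := Nat.sInf_mem hSne
  rw [← hmdef] at hf₁deg
  have hmin : ∀ f ∈ I, f ≠ 0 → m ≤ f.natDegree := fun f hf h0 =>
    hmdef ▸ Nat.sInf_le ⟨f, hf, h0, rfl⟩
  -- the ideal of m-th coefficients of elements of I of degree ≤ m
  let J : Ideal A :=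
    { carrier := {a | ∃ f ∈ I, f.natDegree ≤ m ∧ f.coeff m = a}
      add_mem' := by
        rintro a b ⟨f, hf, hfd, rfl⟩ ⟨f', hf', hfd', rfl⟩
        exact ⟨f + f', I.add_mem hf hf',
          le_trans (natDegree_add_le _ _) (max_le hfd hfd'), by simp⟩
      zero_mem' := ⟨0, I.zero_mem, by simp, by simp⟩
      smul_mem' := by
        rintro r a ⟨f, hf, hfd, rfl⟩
        refine ⟨C r * f, I.mul_mem_left _ hf, ?_, by simp⟩
        exact le_trans (natDegree_mul_le) (by simpa using hfd) }
  have hmemJ : ∀ a : A, a ∈ J ↔ ∃ f ∈ I, f.natDegree ≤ m ∧ f.coeff m = a := fun a => Iff.rfl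
  -- for f ∈ I with degree ≤ m, D' f has degree ≤ m and m-th coefficient D (f.coeff m)
  have hDdeg : ∀ f : A[X], f.natDegree ≤ m → (D' f).natDegree ≤ m ∧
      (D' f).coeff m = D (f.coeff m) := by
    intro f hfd
    constructor
    · rw [natDegree_le_iff_coeff_eq_zero]
      intro r hr
      rw [coeff_der D' D _ hC hX,
        coeff_eq_zero_of_natDegree_lt (lt_of_le_of_lt hfd hr),
        coeff_eq_zero_of_natDegree_lt (lt_of_le_of_lt hfd (show m < r + 1 by omega))]
      simp
    · rw [coeff_der D' D _ hC hX,
        coeff_eq_zero_of_natDegree_lt (lt_of_le_of_lt hfd (show m < m + 1 by omega))]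
      simp
  have hJstable : ∀ a ∈ J, D a ∈ J := by
    rintro a ⟨f, hf, hfd, rfl⟩
    exact ⟨D' f, hI f hf, (hDdeg f hfd).1, (hDdeg f hfd).2⟩
  have hJne : J ≠ ⊥ := by
    intro hJ
    have h0 : f₁.coeff m ∈ J := ⟨f₁, hf₁I, le_of_eq hf₁deg, rfl⟩
    rw [hJ, Ideal.mem_bot] at h0
    apply hf₁0
    rw [← leadingCoeff_eq_zero, leadingCoeff, hf₁deg]
    exact h0
  have hJtop : J = ⊤ := (hsimple J hJstable).resolve_left hJne
  have h1J : (1 : A) ∈ J := hJtop ▸ Submodule.mem_top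
  obtain ⟨f, hfI, hfdeg, hf1⟩ := h1J
  -- D' f = 0
  have hDf0 : D' f = 0 := by
    by_contra hne
    have h1 : m ≤ (D' f).natDegree := hmin _ (hI f hfI) hne
    have h2 : (D' f).natDegree ≤ m := (hDdeg f hfdeg).1
    have h3 : (D' f).natDegree = m := le_antisymm h2 h1
    have h4 : (D' f).coeff m = 0 := by rw [(hDdeg f hfdeg).2, hf1]; simp
    rw [← h3] at h4
    exact hne (leadingCoeff_eq_zero.mp h4)
  rcases Nat.eq_zero_or_pos m with hm0 | hmpos
  · -- f is the constant 1
    rw [Ideal.eq_top_iff_one]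
    have h1 : f.coeff 0 = 1 := hm0 ▸ hf1
    have h2 : f.natDegree ≤ 0 := hm0 ▸ hfdeg
    have : f = 1 := by rw [Polynomial.eq_C_of_natDegree_le_zero h2, h1, map_one]
    rwa [this] at hfI
  · -- contradiction via condition (i)
    exfalso
    have hco : D (f.coeff (m - 1)) +
        ((m - 1) + 1) • (Polynomial.aeval t G₀ * f.coeff ((m - 1) + 1)) = 0 := by
      rw [← coeff_der D' D _ hC hX, hDf0]; simp
    have hm1 : m - 1 + 1 = m := by omega
    rw [hm1, hf1, mul_one] at hco
    have hD : D (f.coeff (m - 1)) = Polynomial.aeval t (-((m : k) • G₀)) := by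
      rw [map_neg, map_smul, Nat.cast_smul_eq_nsmul]
      exact eq_neg_of_add_eq_zero_left hco
    have hdeg : (((-((m : k) • G₀)).natDegree : ℕ∞)) ≤ l := by
      refine le_trans ?_ hG₀l
      rw [Nat.cast_le, natDegree_neg]
      exact natDegree_smul_le _ _
    obtain ⟨-, hz⟩ := hcond _ _ hdeg hD
    rw [neg_eq_zero] at hz
    have hz0 : G₀ = 0 := by
      have h5 : ((m : ℕ) : k) ≠ 0 := Nat.cast_ne_zero.mpr (by omega)
      rwa [smul_eq_zero_iff_right h5] at hz
    rw [hz0] at hG₀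
    simp at hG₀

end Main


section Glue
open MvPolynomial

variable {k : Type*} [CommSemiring k]

/-- The iso peeling off the last variable. -/
noncomputable def phim (k : Type*) [CommSemiring k] (m : ℕ) :
    MvPolynomial (Fin (m + 1)) k ≃ₐ[k] Polynomial (MvPolynomial (Fin m) k) :=
  (renameEquiv k finSuccEquivLast).trans (optionEquivLeft k (Fin m))

lemma phim_X_castSucc (m : ℕ) (j : Fin m) :
    phim k m (X (Fin.castSucc j)) = Polynomial.C (X j) := by
  simp [phim, finSuccEquivLast_castSucc, optionEquivLeft_X_some]

lemma phim_X_last (m : ℕ) :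
    phim k m (X (Fin.last m)) = Polynomial.X := by
  simp [phim, finSuccEquivLast_last, optionEquivLeft_X_none]

lemma phim_rename_castSucc (m : ℕ) (p : MvPolynomial (Fin m) k) :
    phim k m (rename Fin.castSucc p) = Polynomial.C p := by
  have h : ((phim k m).toAlgHom.comp (rename (R := k) (Fin.castSucc : Fin m → Fin (m + 1))))
      = Polynomial.CAlgHom := by
    apply MvPolynomial.algHom_ext
    intro j
    simp [phim_X_castSucc, Polynomial.CAlgHom]
  exact DFunLike.congr_fun h p

end Glue

section Glue2
open MvPolynomial

variable {k : Type*} [Field k] [CharZero k]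

noncomputable def Dm (k : Type*) [Field k] {i : ℕ}
    (di : Derivation k (MvPolynomial (Fin i) k) (MvPolynomial (Fin i) k))
    (G : ℕ → Polynomial k) (m : ℕ) (him : i ≤ m) :
    Derivation k (MvPolynomial (Fin m) k) (MvPolynomial (Fin m) k) :=
  MvPolynomial.mkDerivation k (fun j =>
    if h : (j : ℕ) < i then rename (Fin.castLE him) (di (X ⟨j, h⟩))
    else Polynomial.aeval (X (⟨(j : ℕ) - 1, lt_of_le_of_lt (Nat.sub_le _ _) j.isLt⟩ : Fin m))
      (G (j : ℕ)))

lemma Dm_X {i : ℕ} (di : Derivation k (MvPolynomial (Fin i) k) (MvPolynomial (Fin i) k))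
    (G : ℕ → Polynomial k) (m : ℕ) (him : i ≤ m) (j : Fin m) :
    Dm k di G m him (X j) =
      if h : (j : ℕ) < i then rename (Fin.castLE him) (di (X ⟨j, h⟩))
      else Polynomial.aeval (X (⟨(j : ℕ) - 1, lt_of_le_of_lt (Nat.sub_le _ _) j.isLt⟩ : Fin m))
        (G (j : ℕ)) :=
  mkDerivation_X _ _ _

end Glue2

section StepGlue
open MvPolynomial

variable {k : Type*} [Field k] [CharZero k]

theorem step_glue {i m : ℕ} (hi : 2 ≤ i) (him : i ≤ m) (him1 : i ≤ m + 1)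
    (di : Derivation k (MvPolynomial (Fin i) k) (MvPolynomial (Fin i) k))
    (G : ℕ → Polynomial k) (l' : ℕ∞)
    (hG0 : 0 < (G m).natDegree) (hG0l : ((G m).natDegree : ℕ∞) ≤ l')
    (ihc : ∀ (r : MvPolynomial (Fin m) k) (h : Polynomial k),
      (h.natDegree : ℕ∞) ≤ l' →
      Dm k di G m him r = Polynomial.aeval (X (⟨m - 1, by omega⟩ : Fin m)) h →
      (∃ c : k, r = C c) ∧ h = 0)
    (ihs : ∀ I : Ideal (MvPolynomial (Fin m) k),
      (∀ f ∈ I, Dm k di G m him f ∈ I) → I = ⊥ ∨ I = ⊤) :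
    (∀ (r : MvPolynomial (Fin (m + 1)) k) (h : Polynomial k),
      Dm k di G (m + 1) him1 r = Polynomial.aeval (X (⟨m, by omega⟩ : Fin (m + 1))) h →
      (∃ c : k, r = C c) ∧ h = 0)
    ∧ (∀ I : Ideal (MvPolynomial (Fin (m + 1)) k),
        (∀ f ∈ I, Dm k di G (m + 1) him1 f ∈ I) → I = ⊥ ∨ I = ⊤) := by
  have hC : ∀ a : MvPolynomial (Fin m) k,
      conjDer (phim k m) (Dm k di G (m + 1) him1) (Polynomial.C a)
        = Polynomial.C (Dm k di G m him a) := by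
    have key : ∀ j : Fin m,
        conjDer (phim k m) (Dm k di G (m + 1) him1) (Polynomial.C (X j))
          = Polynomial.C (Dm k di G m him (X j)) := by
      intro j
      have hsymm : (phim k m).symm (Polynomial.C (X j)) = X (Fin.castSucc j) := by
        rw [AlgEquiv.symm_apply_eq, phim_X_castSucc]
      rw [conjDer_apply, hsymm, Dm_X, Dm_X]
      by_cases h : (j : ℕ) < i
      · rw [dif_pos (show ((Fin.castSucc j : Fin (m + 1)) : ℕ) < i from h), dif_pos h]
        have hcomp : (Fin.castLE him1 : Fin i → Fin (m + 1))
            = Fin.castSucc ∘ Fin.castLE him := funext fun x => rfl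
        rw [hcomp, ← rename_rename, phim_rename_castSucc]
        rfl
      · rw [dif_neg (show ¬ ((Fin.castSucc j : Fin (m + 1)) : ℕ) < i from h), dif_neg h]
        rw [show (⟨((Fin.castSucc j : Fin (m + 1)) : ℕ) - 1,
            lt_of_le_of_lt (Nat.sub_le _ _) (Fin.castSucc j).isLt⟩ : Fin (m + 1))
          = Fin.castSucc ⟨(j : ℕ) - 1, lt_of_le_of_lt (Nat.sub_le _ _) j.isLt⟩ from rfl]
        rw [← Polynomial.aeval_algHom_apply, phim_X_castSucc]
        exact Polynomial.aeval_algHom_apply Polynomial.CAlgHom _ _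
    have e : (Derivation.compAlgebraMap (MvPolynomial (Fin m) k)
          (conjDer (phim k m) (Dm k di G (m + 1) him1)))
        = (Algebra.linearMap (MvPolynomial (Fin m) k)
            (Polynomial (MvPolynomial (Fin m) k))).compDer (Dm k di G m him) := by
      apply MvPolynomial.derivation_ext
      intro j
      simpa [Polynomial.algebraMap_eq] using key j
    intro a
    have h2 := DFunLike.congr_fun e a
    simpa [Polynomial.algebraMap_eq] using h2
  have hX : conjDer (phim k m) (Dm k di G (m + 1) him1) Polynomial.X
      = Polynomial.C (Polynomial.aeval (X (⟨m - 1, by omega⟩ : Fin m)) (G m)) := by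
    have hsymm : (phim k m).symm Polynomial.X = X (Fin.last m) := by
      rw [AlgEquiv.symm_apply_eq, phim_X_last]
    rw [conjDer_apply, hsymm, Dm_X,
      dif_neg (show ¬ ((Fin.last m : ℕ) < i) from by simp [Fin.val_last]; omega)]
    rw [show (⟨((Fin.last m : ℕ)) - 1,
        lt_of_le_of_lt (Nat.sub_le _ _) (Fin.last m).isLt⟩ : Fin (m + 1))
      = Fin.castSucc ⟨m - 1, by omega⟩ from rfl]
    rw [← Polynomial.aeval_algHom_apply, phim_X_castSucc]
    exact Polynomial.aeval_algHom_apply Polynomial.CAlgHom _ _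
  have hcond' : ∀ (a : MvPolynomial (Fin m) k) (h : Polynomial k),
      (h.natDegree : ℕ∞) ≤ l' →
      Dm k di G m him a = Polynomial.aeval (X (⟨m - 1, by omega⟩ : Fin m)) h →
      (∃ c : k, a = algebraMap k (MvPolynomial (Fin m) k) c) ∧ h = 0 := by
    intro a h hb hd
    rcases ihc a h hb hd with ⟨⟨c, hc⟩, h0⟩
    exact ⟨⟨c, by rw [MvPolynomial.algebraMap_eq]; exact hc⟩, h0⟩
  constructor
  · intro r h heq
    have hp : conjDer (phim k m) (Dm k di G (m + 1) him1) (phim k m r)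
        = Polynomial.aeval Polynomial.X h := by
      rw [conjDer_apply, AlgEquiv.symm_apply_apply, heq, ← Polynomial.aeval_algHom_apply,
        show (⟨m, by omega⟩ : Fin (m + 1)) = Fin.last m from rfl, phim_X_last]
    obtain ⟨⟨c, hc⟩, hz⟩ := cond_step (Dm k di G m him) _ _ (G m) l' hC hX hG0 hG0l hcond'
      (phim k m r) h hp
    refine ⟨⟨c, ?_⟩, hz⟩
    have h3 := congrArg (phim k m).symm hc
    rw [AlgEquiv.symm_apply_apply] at h3
    rw [h3, AlgEquiv.commutes, MvPolynomial.algebraMap_eq]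
  · intro I hI
    have hJ : ∀ p ∈ Ideal.comap (phim k m).symm.toAlgHom I,
        conjDer (phim k m) (Dm k di G (m + 1) him1) p
          ∈ Ideal.comap (phim k m).symm.toAlgHom I := by
      intro p hp
      rw [Ideal.mem_comap] at hp ⊢
      change (phim k m).symm p ∈ I at hp
      change (phim k m).symm (conjDer (phim k m) (Dm k di G (m + 1) him1) p) ∈ I
      rw [conjDer_apply, AlgEquiv.symm_apply_apply]
      exact hI _ hp
    rcases simp_step (Dm k di G m him) _ _ (G m) l' hC hX hG0 hG0l hcond' ihs _ hJ with hb | ht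
    · left
      rw [eq_bot_iff]
      intro f hf
      have h1 : phim k m f ∈ Ideal.comap (phim k m).symm.toAlgHom I := by
        rw [Ideal.mem_comap]
        simpa using hf
      rw [hb, Ideal.mem_bot] at h1
      rw [Ideal.mem_bot]
      exact (map_eq_zero_iff _ (phim k m).injective).mp h1
    · right
      rw [Ideal.eq_top_iff_one]
      have h1 : (1 : Polynomial (MvPolynomial (Fin m) k))
          ∈ Ideal.comap (phim k m).symm.toAlgHom I := ht ▸ Submodule.mem_top
      rw [Ideal.mem_comap] at h1
      simpa using h1
end StepGlue

section Final
open MvPolynomial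

theorem stmt8_aux (k : Type*) [Field k] [CharZero k] (i n : ℕ) (hi : 2 ≤ i) (hin : i < n)
    (l : ℕ∞)
    (di : Derivation k (MvPolynomial (Fin i) k) (MvPolynomial (Fin i) k))
    (hdi : ∀ (r : MvPolynomial (Fin i) k) (g : Polynomial k),
      (g.natDegree : ℕ∞) ≤ l →
      di r = Polynomial.aeval (X (⟨i - 1, Nat.sub_lt (lt_of_lt_of_le two_pos hi) Nat.one_pos⟩ : Fin i)) g →
      (∃ c : k, r = C c) ∧ g = 0)
    (hsimple : ∀ I : Ideal (MvPolynomial (Fin i) k), (∀ f ∈ I, di f ∈ I) → I = ⊥ ∨ I = ⊤)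
    (G : ℕ → Polynomial k)
    (hGnc : ∀ j : ℕ, i ≤ j → j < n → 0 < (G j).natDegree)
    (hGdeg : ((G i).natDegree : ℕ∞) ≤ l) :
    ∀ (m : ℕ) (him : i ≤ m), m ≤ n →
      ((∀ (r : MvPolynomial (Fin m) k) (h : Polynomial k),
          (h.natDegree : ℕ∞) ≤ (if m = i then l else ⊤) →
          Dm k di G m him r = Polynomial.aeval (X (⟨m - 1, by omega⟩ : Fin m)) h →
          (∃ c : k, r = C c) ∧ h = 0)
        ∧ (∀ I : Ideal (MvPolynomial (Fin m) k),
            (∀ f ∈ I, Dm k di G m him f ∈ I) → I = ⊥ ∨ I = ⊤)) := by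
  intro m him
  induction m, him using Nat.le_induction with
  | base =>
    intro _
    have hDeq : Dm k di G i (le_refl i) = di := by
      apply MvPolynomial.derivation_ext
      intro j
      rw [Dm_X, dif_pos j.isLt]
      have h1 : (Fin.castLE (le_refl i) : Fin i → Fin i) = id := funext fun x => rfl
      rw [h1, rename_id]
      rfl
    constructor
    · intro r h hb heq
      rw [if_pos rfl] at hb
      rw [hDeq] at heq
      exact hdi r h hb heq
    · intro I hI
      apply hsimple
      intro f hf
      have h2 := hI f hf
      rwa [hDeq] at h2
  | succ m him ih =>
    intro hmn
    obtain ⟨ihc, ihs⟩ := ih (by omega)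
    have hnci : 0 < (G m).natDegree := hGnc m him (by omega)
    have hG0l : ((G m).natDegree : ℕ∞) ≤ (if m = i then l else ⊤) := by
      split
      · next hmi => rw [hmi]; exact hGdeg
      · exact le_top
    obtain ⟨c1, s1⟩ := step_glue hi him (by omega) di G (if m = i then l else ⊤) hnci hG0l ihc ihs
    refine ⟨?_, s1⟩
    intro r h _ heq
    exact c1 r h heq

theorem stmt8' (k : Type*) [Field k] [CharZero k] (i n : ℕ) (hi : 2 ≤ i) (hin : i < n)
    (l : ℕ∞)
    (di : Derivation k (MvPolynomial (Fin i) k) (MvPolynomial (Fin i) k))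
    (hdi : ∀ (r : MvPolynomial (Fin i) k) (g : Polynomial k),
      (g.natDegree : ℕ∞) ≤ l →
      di r = Polynomial.aeval (X (⟨i - 1, Nat.sub_lt (lt_of_lt_of_le two_pos hi) Nat.one_pos⟩ : Fin i)) g →
      (∃ c : k, r = C c) ∧ g = 0)
    (hsimple : ∀ I : Ideal (MvPolynomial (Fin i) k), (∀ f ∈ I, di f ∈ I) → I = ⊥ ∨ I = ⊤)
    (G : ℕ → Polynomial k)
    (hGnc : ∀ j : ℕ, i ≤ j → j < n → 0 < (G j).natDegree)
    (hGdeg : ((G i).natDegree : ℕ∞) ≤ l)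
    (dn : Derivation k (MvPolynomial (Fin n) k) (MvPolynomial (Fin n) k))
    (hres : ∀ j : Fin i,
      dn (X (Fin.castLE hin.le j)) = rename (Fin.castLE hin.le) (di (X j)))
    (hG : ∀ (j : ℕ) (h1 : i ≤ j) (h2 : j < n),
      dn (X (⟨j, h2⟩ : Fin n)) = Polynomial.aeval (X (⟨j - 1, lt_of_le_of_lt (Nat.sub_le j 1) h2⟩ : Fin n)) (G j)) :
    ∀ I : Ideal (MvPolynomial (Fin n) k), (∀ f ∈ I, dn f ∈ I) → I = ⊥ ∨ I = ⊤ := by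
  obtain ⟨-, hsimp⟩ := stmt8_aux k i n hi hin l di hdi hsimple G hGnc hGdeg n hin.le le_rfl
  have heq : dn = Dm k di G n hin.le := by
    apply MvPolynomial.derivation_ext
    intro j
    rw [Dm_X]
    by_cases h : (j : ℕ) < i
    · rw [dif_pos h]
      exact hres ⟨j, h⟩
    · rw [dif_neg h]
      exact hG (j : ℕ) (not_lt.mp h) j.isLt
  intro I hI
  apply hsimp
  intro f hf
  have h2 := hI f hf
  rwa [heq] at h2

end Final



open MvPolynomial

/-- With `d_i` a simple derivation of `k[x₁,…,x_i]` satisfying condition (i),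
the extension `d_n = d_i + g_i(x_i)∂_{x_{i+1}} + … + g_{n-1}(x_{n-1})∂_{x_n}` (each `g_j`
nonconstant, `deg g_i ≤ l`) is a simple derivation of `k[x₁,…,x_n]`.
(Variables are 0-indexed: `X j` is `x_{j+1}`; `G j` is the polynomial `g_j` of the paper,
1-indexed, so `d_n(X j) = G j (X (j-1))` for `i ≤ j < n`.) -/
theorem stmt8 (k : Type*) [Field k] [CharZero k] (i n : ℕ) (hi : 2 ≤ i) (hin : i < n)
    (l : ℕ∞)
    (di : Derivation k (MvPolynomial (Fin i) k) (MvPolynomial (Fin i) k))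
    (hdi : ∀ (r : MvPolynomial (Fin i) k) (g : Polynomial k),
      (g.natDegree : ℕ∞) ≤ l →
      di r = Polynomial.aeval (X (⟨i - 1, by omega⟩ : Fin i)) g →
      (∃ c : k, r = C c) ∧ g = 0)
    (hsimple : ∀ I : Ideal (MvPolynomial (Fin i) k), (∀ f ∈ I, di f ∈ I) → I = ⊥ ∨ I = ⊤)
    (G : ℕ → Polynomial k)
    (hGnc : ∀ j : ℕ, i ≤ j → j < n → 0 < (G j).natDegree)
    (hGdeg : ((G i).natDegree : ℕ∞) ≤ l)
    (dn : Derivation k (MvPolynomial (Fin n) k) (MvPolynomial (Fin n) k))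
    (hres : ∀ j : Fin i,
      dn (X (Fin.castLE hin.le j)) = rename (Fin.castLE hin.le) (di (X j)))
    (hG : ∀ (j : ℕ) (h1 : i ≤ j) (h2 : j < n),
      dn (X (⟨j, h2⟩ : Fin n)) = Polynomial.aeval (X (⟨j - 1, by omega⟩ : Fin n)) (G j)) :
    ∀ I : Ideal (MvPolynomial (Fin n) k), (∀ f ∈ I, dn f ∈ I) → I = ⊥ ∨ I = ⊤ := by
  exact stmt8' k i n hi hin l di hdi hsimple G hGnc hGdeg dn hres hG
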